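/- Let Γ : Σ̄ ⇉ ℝ³ be a multifunction and f : Σ̄ × ℝ³ → [0,+∞]. Assume: (H1) f is a Carathéodory integrand (f(·,ζ) is measurable for each ζ and f(x,·) is continuous for each x); (H2) Γ is nonempty-valued, convex-valued, closed-valued and lower semicontinuous; (H3) the set C(Σ̄;Γ) of continuous selections of Γ is nonempty, and for every φ, φ̂ ∈ C(Σ̄;Γ), ∫_Σ max_{α∈[0,1]} f(x, αφ(x)+(1-α)φ̂(x)) dx < +∞. Then inf_{φ ∈ C(Σ̄;Γ)} ∫_Σ f(x,φ(x)) dx = ∫_Σ inf_{ζ∈Γ(x)} f(x,ζ) dx. -/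

import Mathlib

open scoped ENNReal
open MeasureTheory Filter Metric Set

noncomputable section

attribute [local instance] Matrix.normedAddCommGroup

/-- `juxt ξ ζ` is the 3×3 matrix whose first two columns are the columns of the 3×2 matrix `ξ`
and whose third column is `ζ`, i.e. the matrix denoted `(ξ|ζ)` in the paper. -/
def juxt (ξ : Matrix (Fin 3) (Fin 2) ℝ) (ζ : Fin 3 → ℝ) : Matrix (Fin 3) (Fin 3) ℝ :=
  Matrix.of fun i k => Fin.lastCases (ζ i) (fun j => ξ i j) k

/-- `W0 W ξ = inf_{ζ ∈ ℝ³} W (ξ|ζ)`. -/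
def W0 (W : Matrix (Fin 3) (Fin 3) ℝ → ℝ≥0∞) (ξ : Matrix (Fin 3) (Fin 2) ℝ) : ℝ≥0∞ :=
  ⨅ ζ : Fin 3 → ℝ, W (juxt ξ ζ)

namespace AHMaux

abbrev Xs := Fin 2 → ℝ
abbrev Ys := Fin 3 → ℝ

/-- lower semicontinuity of a multifunction, pointwise open-preimage form. -/
def SelOpen (L : Set Xs) (Ψ : Xs → Set Ys) : Prop :=
  ∀ U : Set Ys, IsOpen U → ∀ x ∈ L, (Ψ x ∩ U).Nonempty →
    ∃ V : Set Xs, IsOpen V ∧ x ∈ V ∧ ∀ y ∈ V ∩ L, (Ψ y ∩ U).Nonempty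

lemma SelOpen.mono {L L' : Set Xs} {Ψ : Xs → Set Ys} (h : SelOpen L Ψ) (hL : L' ⊆ L) :
    SelOpen L' Ψ := by
  intro U hU x hx hne
  obtain ⟨V, hV, hxV, hV'⟩ := h U hU x (hL hx) hne
  exact ⟨V, hV, hxV, fun y hy => hV' y ⟨hy.1, hL hy.2⟩⟩

lemma SelOpen.inter_ball {L : Set Xs} {Ψ : Xs → Set Ys} (h : SelOpen L Ψ)
    {g : Xs → Ys} (hg : ContinuousOn g L) (ε : ℝ) :
    SelOpen L (fun x => Ψ x ∩ ball (g x) ε) := by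
  intro U hU x hxL hne
  obtain ⟨ζ, hζ, hζU⟩ := hne
  obtain ⟨hζΨ, hζb⟩ := hζ
  have hr : 0 < ε - dist ζ (g x) := by
    have := mem_ball.1 hζb; linarith
  set r := ε - dist ζ (g x) with hrdef
  obtain ⟨δ₀, hδ₀, hδ₀U⟩ := Metric.isOpen_iff.1 hU ζ hζU
  set δ := min δ₀ (r/3) with hδdef
  have hδpos : 0 < δ := lt_min hδ₀ (by linarith)
  obtain ⟨V₁, hV₁, hxV₁, hV₁'⟩ := h (ball ζ δ) isOpen_ball x hxL
    ⟨ζ, hζΨ, mem_ball_self hδpos⟩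
  have hgx := hg x hxL
  have hmem : g ⁻¹' (ball (g x) (r/3)) ∈ nhdsWithin x L :=
    hgx.preimage_mem_nhdsWithin (ball_mem_nhds _ (by linarith))
  obtain ⟨V₂, hV₂, hxV₂, hV₂'⟩ := mem_nhdsWithin.1 hmem
  refine ⟨V₁ ∩ V₂, hV₁.inter hV₂, ⟨hxV₁, hxV₂⟩, ?_⟩
  rintro y ⟨⟨hyV₁, hyV₂⟩, hyL⟩
  obtain ⟨η, hηΨ, hηb⟩ := hV₁' y ⟨hyV₁, hyL⟩
  refine ⟨η, ⟨hηΨ, ?_⟩, hδ₀U (ball_subset_ball (min_le_left _ _) hηb)⟩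
  have h1 : dist η ζ < δ := mem_ball.1 hηb
  have h2 : dist (g y) (g x) < r/3 := mem_ball.1 (hV₂' ⟨hyV₂, hyL⟩)
  have h3 : dist ζ (g x) = ε - r := by rw [hrdef]; ring
  have h4 : dist η (g y) ≤ dist η ζ + dist ζ (g x) + dist (g x) (g y) := dist_triangle4 _ _ _ _
  have hδle : δ ≤ r/3 := min_le_right _ _
  rw [dist_comm (g x) (g y)] at h4
  exact mem_ball.2 (by linarith)


lemma approx_sel {L : Set Xs} (hL : IsCompact L) {Ψ : Xs → Set Ys}
    (hne : ∀ x ∈ L, (Ψ x).Nonempty) (hconv : ∀ x ∈ L, Convex ℝ (Ψ x))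
    (hP : SelOpen L Ψ) {ε : ℝ} (hε : 0 < ε) :
    ∃ h : Xs → Ys, ContinuousOn h L ∧ ∀ x ∈ L, ∃ η ∈ Ψ x, dist (h x) η < ε := by
  classical
  -- choose a target point and a neighborhood for every z ∈ L
  have hVz : ∀ z : L, ∃ ζ : Ys, ∃ V : Set Xs, IsOpen V ∧ (z:Xs) ∈ V ∧ V ⊆ ball (z:Xs) 1 ∧
      ∀ y ∈ V ∩ L, (Ψ y ∩ ball ζ (ε/2)).Nonempty := by
    rintro ⟨z, hz⟩
    obtain ⟨ζ, hζ⟩ := hne z hz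
    obtain ⟨V, hV, hzV, hV'⟩ := hP (ball ζ (ε/2)) isOpen_ball z hz
      ⟨ζ, hζ, mem_ball_self (by linarith)⟩
    exact ⟨ζ, V ∩ ball z 1, hV.inter isOpen_ball, ⟨hzV, mem_ball_self one_pos⟩,
      inter_subset_right, fun y hy => hV' y ⟨hy.1.1, hy.2⟩⟩
  choose ζf Vf hVo hVmem hVball hVprop using hVz
  -- finite subcover
  obtain ⟨t, ht⟩ := hL.elim_finite_subcover (fun z : L => Vf z) hVo
    (fun x hx => mem_iUnion.2 ⟨⟨x, hx⟩, hVmem ⟨x, hx⟩⟩)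
  -- partition of unity
  set p : L → Xs → ℝ := fun i x => infDist x (Vf i)ᶜ with hp
  have hpc : ∀ i, Continuous (p i) := fun i => continuous_infDist_pt _
  have hpnn : ∀ i x, 0 ≤ p i x := fun i x => infDist_nonneg
  have hpz : ∀ i x, x ∉ Vf i → p i x = 0 := fun i x hx => infDist_zero_of_mem hx
  have hcne : ∀ i : L, ((Vf i)ᶜ).Nonempty := by
    intro i
    refine ⟨(i:Xs) + (fun _ => 2), fun hmem => ?_⟩
    have h2 : dist ((i:Xs) + (fun _ => 2 : Xs)) (i:Xs) = ‖(fun _ => 2 : Xs)‖ := by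
      rw [dist_eq_norm]; congr 1; abel
    have h3 : ‖(fun _ => 2 : Xs)‖ = 2 := by simpa using pi_norm_const (2:ℝ) (ι := Fin 2)
    have := mem_ball.1 (hVball i hmem)
    rw [h2, h3] at this; norm_num at this
  have hppos : ∀ i x, x ∈ Vf i → 0 < p i x := by
    intro i x hx
    have hnm : x ∉ (Vf i)ᶜ := fun hc => hc hx
    have := ((hVo i).isClosed_compl.notMem_iff_infDist_pos (hcne i)).1 hnm
    simpa [hp] using this
  set σ : Xs → ℝ := fun x => ∑ i ∈ t, p i x with hσ
  have hσc : Continuous σ := continuous_finset_sum _ fun i _ => hpc i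
  have hσpos : ∀ x ∈ L, 0 < σ x := by
    intro x hx
    obtain ⟨i, hit, hiV⟩ := by
      have := ht hx
      simpa only [mem_iUnion, exists_prop] using this
    exact lt_of_lt_of_le (hppos i x hiV)
      (Finset.single_le_sum (fun j _ => hpnn j x) hit)
  set w : L → Xs → ℝ := fun i x => p i x / σ x with hw
  refine ⟨fun x => ∑ i ∈ t, w i x • ζf i, ?_, ?_⟩
  · apply continuousOn_finset_sum
    intro i _
    exact (((hpc i).continuousOn).div hσc.continuousOn
      (fun x hx => (hσpos x hx).ne')).smul continuousOn_const
  · intro x hx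
    -- choose near points
    have hη : ∀ i : L, ∃ η, η ∈ Ψ x ∧ (x ∈ Vf i → dist (ζf i) η < ε/2) := by
      intro i
      by_cases hxV : x ∈ Vf i
      · obtain ⟨η, hη1, hη2⟩ := hVprop i x ⟨hxV, hx⟩
        exact ⟨η, hη1, fun _ => by rw [dist_comm]; exact mem_ball.1 hη2⟩
      · obtain ⟨η, hη⟩ := hne x hx
        exact ⟨η, hη, fun h => absurd h hxV⟩
    choose η hη1 hη2 using hη
    have hwnn : ∀ i, 0 ≤ w i x := fun i => div_nonneg (hpnn i x) (hσpos x hx).le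
    have hwsum : ∑ i ∈ t, w i x = 1 := by
      rw [hw]; simp only
      rw [← Finset.sum_div]
      exact div_self (hσpos x hx).ne'
    refine ⟨∑ i ∈ t, w i x • η i, Convex.sum_mem (hconv x hx) (fun i _ => hwnn i) hwsum
      (fun i _ => hη1 i), ?_⟩
    have key : dist (∑ i ∈ t, w i x • ζf i) (∑ i ∈ t, w i x • η i) ≤ ε/2 := by
      rw [dist_eq_norm, ← Finset.sum_sub_distrib]
      have : ∀ i ∈ t, w i x • ζf i - w i x • η i = w i x • (ζf i - η i) := by
        intro i _; rw [smul_sub]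
      rw [Finset.sum_congr rfl this]
      calc ‖∑ i ∈ t, w i x • (ζf i - η i)‖ ≤ ∑ i ∈ t, ‖w i x • (ζf i - η i)‖ :=
            norm_sum_le _ _
      _ ≤ ∑ i ∈ t, w i x * (ε/2) := by
          apply Finset.sum_le_sum
          intro i _
          rw [norm_smul, Real.norm_eq_abs, abs_of_nonneg (hwnn i)]
          rcases eq_or_lt_of_le (hwnn i) with h0 | h0
          · rw [← h0]; simp
          · have hxV : x ∈ Vf i := by
              by_contra hxV
              rw [hw] at h0; simp only at h0
              rw [hpz i x hxV] at h0; simp at h0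
            have : ‖ζf i - η i‖ < ε/2 := by
              rw [← dist_eq_norm]; exact hη2 i hxV
            exact mul_le_mul_of_nonneg_left this.le (hwnn i)
      _ = ε/2 := by rw [← Finset.sum_mul, hwsum, one_mul]
    linarith

lemma michael {L : Set Xs} (hL : IsCompact L) {Ψ : Xs → Set Ys}
    (hne : ∀ x ∈ L, (Ψ x).Nonempty) (hconv : ∀ x ∈ L, Convex ℝ (Ψ x))
    (hP : SelOpen L Ψ) :
    ∃ g : Xs → Ys, ContinuousOn g L ∧ ∀ x ∈ L, g x ∈ closure (Ψ x) := by
  classical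
  set Pn : ℕ → (Xs → Ys) → Prop := fun n g =>
    ContinuousOn g L ∧ ∀ x ∈ L, (Ψ x ∩ ball (g x) ((2:ℝ)⁻¹^n)).Nonempty with hPn
  have h0 : ∃ g, Pn 0 g := by
    obtain ⟨h, hc, hd⟩ := approx_sel hL hne hconv hP (ε := 1/2) (by norm_num)
    refine ⟨h, hc, fun x hx => ?_⟩
    obtain ⟨η, hη, hd⟩ := hd x hx
    exact ⟨η, hη, by rw [mem_ball, dist_comm]; simpa using hd.trans_le (by norm_num)⟩
  have key : ∀ n (g : Xs → Ys), Pn n g →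
      ∃ g', Pn (n+1) g' ∧ ∀ x ∈ L, dist (g' x) (g x) ≤ 2 * (2:ℝ)⁻¹^n := by
    intro n g hg
    have hΨ' : ∀ x ∈ L, ((fun x => Ψ x ∩ ball (g x) ((2:ℝ)⁻¹^n)) x).Nonempty := hg.2
    have hconv' : ∀ x ∈ L, Convex ℝ (Ψ x ∩ ball (g x) ((2:ℝ)⁻¹^n)) :=
      fun x hx => (hconv x hx).inter (convex_ball _ _)
    have hP' := hP.inter_ball hg.1 ((2:ℝ)⁻¹^n)
    obtain ⟨h, hc, hd⟩ := approx_sel hL hΨ' hconv' hP' (ε := (2:ℝ)⁻¹^(n+1)) (by positivity)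
    refine ⟨h, ⟨hc, fun x hx => ?_⟩, fun x hx => ?_⟩
    · obtain ⟨η, hη, hdist⟩ := hd x hx
      exact ⟨η, hη.1, by rw [mem_ball, dist_comm]; exact hdist⟩
    · obtain ⟨η, hη, hdist⟩ := hd x hx
      have h1 : dist η (g x) < (2:ℝ)⁻¹^n := mem_ball.1 hη.2
      calc dist (h x) (g x) ≤ dist (h x) η + dist η (g x) := dist_triangle _ _ _
      _ ≤ (2:ℝ)⁻¹^(n+1) + (2:ℝ)⁻¹^n := by linarith
      _ ≤ 2 * (2:ℝ)⁻¹^n := by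
          rw [pow_succ]
          nlinarith [pow_pos (by norm_num : (0:ℝ) < 2⁻¹) n]
  -- recursive construction
  let Grec : ∀ n : ℕ, {g : Xs → Ys // Pn n g} := fun n =>
    Nat.rec ⟨h0.choose, h0.choose_spec⟩
      (fun n p => ⟨(key n p.1 p.2).choose, (key n p.1 p.2).choose_spec.1⟩) n
  set G : ℕ → Xs → Ys := fun n => (Grec n).1 with hG
  have hGP : ∀ n, Pn n (G n) := fun n => (Grec n).2
  have hstep : ∀ n, ∀ x ∈ L, dist (G (n+1) x) (G n x) ≤ 2 * (2:ℝ)⁻¹^n := by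
    intro n
    exact (key n (Grec n).1 (Grec n).2).choose_spec.2
  -- geometric estimate
  have hgeom : ∀ m n, ∀ x ∈ L, dist (G (n+m) x) (G n x) ≤ 4 * (2:ℝ)⁻¹^n - 4 * (2:ℝ)⁻¹^(n+m) := by
    intro m
    induction m with
    | zero => intro n x _; simp
    | succ m ih =>
      intro n x hx
      have e : n + (m+1) = (n+1) + m := by omega
      have hGe : G (n + (m+1)) = G ((n+1)+m) := by rw [e]
      rw [hGe]
      calc dist (G ((n+1)+m) x) (G n x)
          ≤ dist (G ((n+1)+m) x) (G (n+1) x) + dist (G (n+1) x) (G n x) := dist_triangle _ _ _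
      _ ≤ (4 * (2:ℝ)⁻¹^(n+1) - 4 * (2:ℝ)⁻¹^((n+1)+m)) + 2 * (2:ℝ)⁻¹^n :=
          add_le_add (ih (n+1) x hx) (hstep n x hx)
      _ = 4 * (2:ℝ)⁻¹^n - 4 * (2:ℝ)⁻¹^(n+(m+1)) := by
          have e2 : (2:ℝ)⁻¹^(n+(m+1)) = (2:ℝ)⁻¹^((n+1)+m) := by rw [e]
          rw [e2, pow_succ]; ring
  have hgeom' : ∀ n m, n ≤ m → ∀ x ∈ L, dist (G m x) (G n x) ≤ 4 * (2:ℝ)⁻¹^n := by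
    intro n m hnm x hx
    obtain ⟨k, rfl⟩ := Nat.exists_eq_add_of_le hnm
    exact (hgeom k n x hx).trans (by nlinarith [pow_pos (by norm_num : (0:ℝ) < 2⁻¹) (n+k)])
  -- pointwise limits
  have hcauchy : ∀ x ∈ L, CauchySeq (fun n => G n x) := by
    intro x hx
    apply cauchySeq_of_le_geometric (2:ℝ)⁻¹ 2 (by norm_num)
    intro n
    rw [dist_comm]
    exact hstep n x hx
  set g : Xs → Ys := fun x => limUnder atTop (fun n => G n x) with hgdef
  have hgt : ∀ x ∈ L, Tendsto (fun n => G n x) atTop (nhds (g x)) :=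
    fun x hx => (hcauchy x hx).tendsto_limUnder
  have hdistg : ∀ n, ∀ x ∈ L, dist (G n x) (g x) ≤ 4 * (2:ℝ)⁻¹^n := by
    intro n x hx
    have h1 : Tendsto (fun m => dist (G n x) (G m x)) atTop (nhds (dist (G n x) (g x))) :=
      (Continuous.tendsto (continuous_const.dist continuous_id) _).comp (hgt x hx)
    refine le_of_tendsto h1 ?_
    filter_upwards [eventually_ge_atTop n] with m hm
    rw [dist_comm]
    exact hgeom' n m hm x hx
  have htu : TendstoUniformlyOn (fun n x => G n x) g atTop L := by
    rw [Metric.tendstoUniformlyOn_iff]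
    intro ε hε
    obtain ⟨N, hN⟩ := exists_pow_lt_of_lt_one (by linarith : (0:ℝ) < ε/4) (by norm_num : (2:ℝ)⁻¹ < 1)
    filter_upwards [eventually_ge_atTop N] with n hn x hx
    have h1 : (2:ℝ)⁻¹ ^ n ≤ (2:ℝ)⁻¹ ^ N :=
      pow_le_pow_of_le_one (by norm_num) (by norm_num) hn
    have := hdistg n x hx
    calc dist (g x) (G n x) = dist (G n x) (g x) := dist_comm _ _
    _ ≤ 4 * (2:ℝ)⁻¹^n := hdistg n x hx
    _ < ε := by nlinarith
  refine ⟨g, htu.continuousOn (Eventually.of_forall fun n => (hGP n).1).frequently, ?_⟩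
  intro x hx
  rw [Metric.mem_closure_iff]
  intro ε hε
  obtain ⟨N, hN⟩ := exists_pow_lt_of_lt_one (by linarith : (0:ℝ) < ε/5) (by norm_num : (2:ℝ)⁻¹ < 1)
  obtain ⟨η, hη, hηd⟩ := (hGP N).2 x hx
  refine ⟨η, hη, ?_⟩
  have h1 := hdistg N x hx
  have h2 : dist η (G N x) < (2:ℝ)⁻¹^N := mem_ball.1 hηd
  calc dist (g x) η ≤ dist (g x) (G N x) + dist (G N x) η := dist_triangle _ _ _
  _ ≤ 4 * (2:ℝ)⁻¹^N + (2:ℝ)⁻¹^N := by rw [dist_comm (G N x) η]; rw [dist_comm (g x) (G N x)]; linarith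
  _ < ε := by nlinarith

lemma michael_ext {K L : Set Xs} (hK : IsCompact K) (hLK : L ⊆ K) (hLc : IsClosed L)
    {Γ : Xs → Set Ys} (hne : ∀ x ∈ K, (Γ x).Nonempty) (hconv : ∀ x ∈ K, Convex ℝ (Γ x))
    (hcl : ∀ x ∈ K, IsClosed (Γ x)) (hP : SelOpen K Γ)
    {g : Xs → Ys} (hg : ContinuousOn g L) (hgΓ : ∀ x ∈ L, g x ∈ Γ x) :
    ∃ φ : Xs → Ys, ContinuousOn φ K ∧ (∀ x ∈ K, φ x ∈ Γ x) ∧ ∀ x ∈ L, φ x = g x := by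
  classical
  set Ψ : Xs → Set Ys := fun x => if x ∈ L then {g x} else Γ x with hΨ
  have hΨ1 : ∀ y, y ∈ L → Ψ y = {g y} := fun y hy => if_pos hy
  have hΨ2 : ∀ y, y ∉ L → Ψ y = Γ y := fun y hy => if_neg hy
  have hne' : ∀ x ∈ K, (Ψ x).Nonempty := by
    intro x hx
    by_cases hxL : x ∈ L
    · rw [hΨ1 x hxL]; exact ⟨g x, rfl⟩
    · rw [hΨ2 x hxL]; exact hne x hx
  have hconv' : ∀ x ∈ K, Convex ℝ (Ψ x) := by
    intro x hx
    by_cases hxL : x ∈ L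
    · rw [hΨ1 x hxL]; exact convex_singleton _
    · rw [hΨ2 x hxL]; exact hconv x hx
  have hP' : SelOpen K Ψ := by
    intro U hU x hxK hnex
    by_cases hxL : x ∈ L
    · have hgU : g x ∈ U := by
        obtain ⟨ζ, hζ1, hζ2⟩ := hnex
        rw [hΨ1 x hxL] at hζ1
        rw [← mem_singleton_iff.1 hζ1]; exact hζ2
      obtain ⟨V₁, hV₁, hxV₁, hV₁'⟩ := hP U hU x hxK ⟨g x, hgΓ x hxL, hgU⟩
      have hmem : g ⁻¹' U ∈ nhdsWithin x L :=
        (hg x hxL).preimage_mem_nhdsWithin (hU.mem_nhds hgU)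
      obtain ⟨V₂, hV₂, hxV₂, hV₂'⟩ := mem_nhdsWithin.1 hmem
      refine ⟨V₁ ∩ V₂, hV₁.inter hV₂, ⟨hxV₁, hxV₂⟩, ?_⟩
      rintro y ⟨⟨hyV₁, hyV₂⟩, hyK⟩
      by_cases hyL : y ∈ L
      · exact ⟨g y, by rw [hΨ1 y hyL]; rfl, hV₂' ⟨hyV₂, hyL⟩⟩
      · obtain ⟨ζ, hζ⟩ := hV₁' y ⟨hyV₁, hyK⟩
        exact ⟨ζ, by rw [hΨ2 y hyL]; exact hζ.1, hζ.2⟩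
    · have hnex' : (Γ x ∩ U).Nonempty := by
        obtain ⟨ζ, hζ1, hζ2⟩ := hnex
        rw [hΨ2 x hxL] at hζ1
        exact ⟨ζ, hζ1, hζ2⟩
      obtain ⟨V₁, hV₁, hxV₁, hV₁'⟩ := hP U hU x hxK hnex'
      refine ⟨V₁ ∩ Lᶜ, hV₁.inter hLc.isOpen_compl, ⟨hxV₁, hxL⟩, ?_⟩
      rintro y ⟨⟨hyV₁, hyL⟩, hyK⟩
      obtain ⟨ζ, hζ⟩ := hV₁' y ⟨hyV₁, hyK⟩
      exact ⟨ζ, by rw [hΨ2 y hyL]; exact hζ.1, hζ.2⟩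
  obtain ⟨φ, hφc, hφm⟩ := michael hK hne' hconv' hP'
  refine ⟨φ, hφc, ?_, ?_⟩
  · intro x hx
    by_cases hxL : x ∈ L
    · have := hφm x hx
      rw [hΨ1 x hxL, closure_singleton] at this
      rw [mem_singleton_iff.1 this]; exact hgΓ x hxL
    · have := hφm x hx
      rw [hΨ2 x hxL] at this
      rwa [(hcl x hx).closure_eq] at this
  · intro x hxL
    have := hφm x (hLK hxL)
    rw [hΨ1 x hxL, closure_singleton] at this
    exact mem_singleton_iff.1 this


lemma simple_comp {f : Xs → Ys → ℝ≥0∞} (hf : ∀ ζ, Measurable fun x => f x ζ)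
    (σ : SimpleFunc Xs Ys) : Measurable fun x => f x (σ x) := by
  intro T hT
  have heq : (fun x => f x (σ x)) ⁻¹' T
      = ⋃ c ∈ σ.range, (⇑σ ⁻¹' {c}) ∩ ((fun x => f x c) ⁻¹' T) := by
    ext x
    simp only [mem_preimage, mem_iUnion, mem_inter_iff, mem_singleton_iff, exists_prop]
    constructor
    · intro hx
      exact ⟨σ x, σ.mem_range_self x, rfl, hx⟩
    · rintro ⟨c, _, hc, hx⟩
      rwa [hc]
  rw [heq]
  exact (σ.range : Finset Ys).measurableSet_biUnion
    (fun c _ => (σ.measurableSet_fiber c).inter (hf c hT))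

lemma measVersion {S : Set Xs}
    {f : Xs → Ys → ℝ≥0∞} (hf_meas : ∀ ζ, Measurable fun x => f x ζ)
    (hf_cont : ∀ x ∈ closure S, Continuous (f x))
    {ψ : Xs → Ys} (hψ : ContinuousOn ψ (closure S)) :
    ∃ F : Xs → ℝ≥0∞, Measurable F ∧ ∀ x ∈ closure S, F x = f x (ψ x) := by
  classical
  have hKm : MeasurableSet (closure S) := isClosed_closure.measurableSet
  set ψ' : Xs → Ys := fun x => if h : x ∈ closure S then ψ x else 0 with hψ'
  have hψ'm : Measurable ψ' := by
    have h1 : Measurable fun x : closure S => ψ (x : Xs) := hψ.restrict.measurable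
    exact Measurable.dite h1 (measurable_const (a := (0:Ys))) hKm
  have hψ'eq : ∀ x ∈ closure S, ψ' x = ψ x := fun x hx => dif_pos hx
  set σ : ℕ → SimpleFunc Xs Ys :=
    SimpleFunc.approxOn ψ' hψ'm univ 0 (mem_univ 0) with hσ
  have hσt : ∀ x, Tendsto (fun n => σ n x) atTop (nhds (ψ' x)) := by
    intro x
    exact SimpleFunc.tendsto_approxOn hψ'm (mem_univ 0) (by simp)
  set H : ℕ → Xs → ℝ≥0∞ := fun n x => f x (σ n x) with hH
  have hHm : ∀ n, Measurable (H n) := fun n => simple_comp hf_meas (σ n)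
  refine ⟨fun x => ⨅ n : ℕ, ⨆ m : ℕ, H (m + n) x, ?_, ?_⟩
  · exact Measurable.iInf fun n => Measurable.iSup fun m => hHm (m + n)
  · intro x hx
    have hcont := hf_cont x hx
    have htt : Tendsto (fun n => H n x) atTop (nhds (f x (ψ' x))) :=
      (hcont.tendsto _).comp (hσt x)
    have hls : Filter.limsup (fun n => H n x) atTop = f x (ψ' x) := htt.limsup_eq
    rw [← hψ'eq x hx, ← hls, Filter.limsup_eq_iInf_iSup_of_nat']

end AHMaux

/-- Theorem 3.4 (interchange of infimum and integral, from [AHM]):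
under (H₁) (Carathéodory integrand), (H₂) (nonempty convex closed valued lower
semicontinuous multifunction) and (H₃), the infimum over continuous selections of `Γ`
of the integral equals the integral of the pointwise infimum. -/
theorem inf_lintegral_eq_lintegral_inf
    (S : Set (Fin 2 → ℝ)) (hSopen : IsOpen S) (hSbdd : Bornology.IsBounded S)
    (Γ : (Fin 2 → ℝ) → Set (Fin 3 → ℝ))
    (f : (Fin 2 → ℝ) → (Fin 3 → ℝ) → ℝ≥0∞)
    -- (H₁) : f is a Carathéodory integrand
    (hf_meas : ∀ ζ : Fin 3 → ℝ, Measurable fun x => f x ζ)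
    (hf_cont : ∀ x ∈ closure S, Continuous (f x))
    -- (H₂) : Γ is a nonempty convex closed-valued lower semicontinuous multifunction
    (hΓ : ∀ x ∈ closure S, (Γ x).Nonempty ∧ Convex ℝ (Γ x) ∧ IsClosed (Γ x))
    (hΓlsc : ∀ X : Set (Fin 3 → ℝ), IsClosed X → ∀ x ∈ closure S, ∀ u : ℕ → (Fin 2 → ℝ),
      (∀ n, u n ∈ closure S) → Tendsto u atTop (nhds x) →
      (∀ n, Γ (u n) ⊆ X) → Γ x ⊆ X)
    -- (H₃)
    (hsel : ∃ φ : (Fin 2 → ℝ) → (Fin 3 → ℝ),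
      ContinuousOn φ (closure S) ∧ ∀ x ∈ closure S, φ x ∈ Γ x)
    (hint : ∀ φ φ' : (Fin 2 → ℝ) → (Fin 3 → ℝ),
      (ContinuousOn φ (closure S) ∧ ∀ x ∈ closure S, φ x ∈ Γ x) →
      (ContinuousOn φ' (closure S) ∧ ∀ x ∈ closure S, φ' x ∈ Γ x) →
      (∫⁻ x in S, ⨆ α ∈ Set.Icc (0:ℝ) 1, f x (α • φ x + (1 - α) • φ' x)) < ⊤) :
    (⨅ φ : {φ : (Fin 2 → ℝ) → (Fin 3 → ℝ) //
        ContinuousOn φ (closure S) ∧ ∀ x ∈ closure S, φ x ∈ Γ x},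
      ∫⁻ x in S, f x (φ.1 x)) = ∫⁻ x in S, ⨅ ζ ∈ Γ x, f x ζ := by
  classical
  obtain ⟨φ₀, hφ₀⟩ := hsel
  have hKc : IsCompact (closure S) := hSbdd.isCompact_closure
  have hKm : MeasurableSet (closure S) := isClosed_closure.measurableSet
  have hSm : MeasurableSet S := hSopen.measurableSet
  have hSK : S ⊆ closure S := subset_closure
  have hμS : volume S ≠ ⊤ := hSbdd.measure_lt_top.ne
  have hconv : ∀ x ∈ closure S, Convex ℝ (Γ x) := fun x hx => (hΓ x hx).2.1
  have hclo : ∀ x ∈ closure S, IsClosed (Γ x) := fun x hx => (hΓ x hx).2.2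
  have hnev : ∀ x ∈ closure S, (Γ x).Nonempty := fun x hx => (hΓ x hx).1
  -- Step 1 : the multifunction is lower semicontinuous in the open-preimage sense
  have hSelOpen : AHMaux.SelOpen (closure S) Γ := by
    intro U hU x hxK hnex
    have hC : IsClosed {y | y ∈ closure S ∧ Γ y ⊆ Uᶜ} := by
      apply IsSeqClosed.isClosed
      intro u p hu hup
      have hpK : p ∈ closure S :=
        isClosed_closure.isSeqClosed (fun n => (hu n).1) hup
      exact ⟨hpK, hΓlsc Uᶜ hU.isClosed_compl p hpK u (fun n => (hu n).1) hup
        (fun n => (hu n).2)⟩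
    refine ⟨{y | y ∈ closure S ∧ Γ y ⊆ Uᶜ}ᶜ, hC.isOpen_compl, ?_, ?_⟩
    · intro hxC
      obtain ⟨ζ, hζ1, hζ2⟩ := hnex
      exact hxC.2 hζ1 hζ2
    · rintro y ⟨hyV, hyK⟩
      rw [Set.mem_compl_iff, Set.mem_setOf_eq] at hyV
      push_neg at hyV
      obtain ⟨ζ, hζΓ, hζU⟩ := Set.not_subset.1 (hyV hyK)
      exact ⟨ζ, hζΓ, by simpa using hζU⟩
  -- Step 2 : the family of selections localized near rational points
  have hfam : ∀ (q : Fin 3 → ℝ) (r : ℝ) (j : ℕ), 0 < r →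
      ∃ φ : (Fin 2 → ℝ) → (Fin 3 → ℝ),
        (ContinuousOn φ (closure S) ∧ ∀ x ∈ closure S, φ x ∈ Γ x) ∧
        ∀ x ∈ (closure S) \ Metric.thickening (1/(j+1))
            ((closure S) \ {y | y ∈ closure S ∧ (Γ y ∩ Metric.ball q r).Nonempty}),
          φ x ∈ Metric.closedBall q r := by
    intro q r j hr
    set D := {y | y ∈ closure S ∧ (Γ y ∩ Metric.ball q r).Nonempty} with hD
    set L := (closure S) \ Metric.thickening (1/(j+1)) ((closure S) \ D) with hLdef
    have hLc : IsClosed L := by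
      rw [hLdef, Set.diff_eq]
      exact isClosed_closure.inter (Metric.isOpen_thickening.isClosed_compl)
    have hLK : L ⊆ closure S := Set.diff_subset
    have hLcmp : IsCompact L := hKc.of_isClosed_subset hLc hLK
    have hLD : L ⊆ D := by
      rintro x ⟨hxK, hxT⟩
      by_contra hxD
      exact hxT (Metric.self_subset_thickening (by positivity) _ ⟨hxK, hxD⟩)
    have hne' : ∀ x ∈ L, (Γ x ∩ Metric.ball q r).Nonempty := fun x hx => (hLD hx).2
    have hconv' : ∀ x ∈ L, Convex ℝ (Γ x ∩ Metric.ball q r) :=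
      fun x hx => (hconv x (hLK hx)).inter (convex_ball _ _)
    have hP' : AHMaux.SelOpen L (fun x => Γ x ∩ Metric.ball q r) :=
      (hSelOpen.inter_ball continuousOn_const r).mono hLK
    obtain ⟨g, hgc, hgm⟩ := AHMaux.michael hLcmp hne' hconv' hP'
    have hgΓ : ∀ x ∈ L, g x ∈ Γ x := by
      intro x hx
      have := hgm x hx
      have h2 : closure (Γ x ∩ Metric.ball q r) ⊆ Γ x :=
        (hclo x (hLK hx)).closure_subset_iff.2 Set.inter_subset_left
      exact h2 this
    have hgB : ∀ x ∈ L, g x ∈ Metric.closedBall q r := by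
      intro x hx
      have := hgm x hx
      have h2 : closure (Γ x ∩ Metric.ball q r) ⊆ Metric.closedBall q r :=
        (closure_mono Set.inter_subset_right).trans Metric.closure_ball_subset_closedBall
      exact h2 this
    obtain ⟨φ, hφc, hφΓ, hφg⟩ := AHMaux.michael_ext hKc hLK hLc hnev hconv hclo hSelOpen hgc hgΓ
    refine ⟨φ, ⟨hφc, hφΓ⟩, fun x hx => ?_⟩
    rw [hφg x hx]
    exact hgB x hx
  -- Step 3 : a countable pointwise dense family of selections
  obtain ⟨e, he⟩ := exists_surjective_nat ((Fin 3 → ℚ) × ℚ × ℕ)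
  have hfam' : ∀ i : (Fin 3 → ℚ) × ℚ × ℕ, ∃ φ,
      (ContinuousOn φ (closure S) ∧ ∀ x ∈ closure S, φ x ∈ Γ x) ∧
      (0 < ((i.2.1:ℝ)) → ∀ x ∈ (closure S) \ Metric.thickening (1/(i.2.2+1))
          ((closure S) \ {y | y ∈ closure S ∧
            (Γ y ∩ Metric.ball (fun k => ((i.1 k : ℝ))) ((i.2.1:ℝ))).Nonempty}),
        φ x ∈ Metric.closedBall (fun k => ((i.1 k : ℝ))) ((i.2.1:ℝ))) := by
    intro i
    by_cases hr : 0 < ((i.2.1:ℝ))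
    · obtain ⟨φ, h1, h2⟩ := hfam (fun k => ((i.1 k : ℝ))) ((i.2.1:ℝ)) i.2.2 hr
      exact ⟨φ, h1, fun _ => h2⟩
    · exact ⟨φ₀, hφ₀, fun h => absurd h hr⟩
  choose Φf hΦf1 hΦf2 using hfam'
  set Φ : ℕ → (Fin 2 → ℝ) → (Fin 3 → ℝ) :=
    fun n => Nat.casesOn n φ₀ (fun m => Φf (e m)) with hΦdef
  have hΦsel : ∀ n, ContinuousOn (Φ n) (closure S) ∧ ∀ x ∈ closure S, Φ n x ∈ Γ x := by
    intro n
    cases n with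
    | zero => exact hφ₀
    | succ m => exact hΦf1 (e m)
  have hdense : ∀ x ∈ closure S, ∀ ζ ∈ Γ x, ∀ ε : ℝ, 0 < ε → ∃ n, dist (Φ n x) ζ < ε := by
    intro x hxK ζ hζ ε hε
    obtain ⟨r, hr0, hrε⟩ := exists_rat_btwn (show (0:ℝ) < ε/3 by linarith)
    have hq : ∀ k : Fin 3, ∃ qk : ℚ, |ζ k - (qk:ℝ)| < r := fun k => exists_rat_near (ζ k) hr0
    choose qv hqv using hq
    set q' : Fin 3 → ℝ := fun k => ((qv k : ℝ)) with hq'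
    have hdistq : dist ζ q' < r := by
      rw [dist_pi_lt_iff hr0]
      intro k
      rw [Real.dist_eq]
      exact hqv k
    set D := {y | y ∈ closure S ∧ (Γ y ∩ Metric.ball q' ((r:ℝ))).Nonempty} with hD
    have hxD : x ∈ D := ⟨hxK, ζ, hζ, by rwa [Metric.mem_ball]⟩
    obtain ⟨V, hV, hxV, hV'⟩ := hSelOpen (Metric.ball q' r) Metric.isOpen_ball x hxK hxD.2
    obtain ⟨δ₀, hδ₀, hδ₀V⟩ := Metric.isOpen_iff.1 hV x hxV
    obtain ⟨j, hj⟩ := exists_nat_one_div_lt hδ₀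
    have hxL : x ∈ (closure S) \ Metric.thickening (1/(j+1)) ((closure S) \ D) := by
      refine ⟨hxK, fun hxT => ?_⟩
      obtain ⟨z, hz, hdz⟩ := Metric.mem_thickening_iff.1 hxT
      have hzV : z ∈ V := by
        apply hδ₀V
        rw [Metric.mem_ball, dist_comm]
        exact hdz.trans hj
      exact hz.2 ⟨hz.1, hV' z ⟨hzV, hz.1⟩⟩
    obtain ⟨n, hn⟩ := he (qv, r, j)
    refine ⟨n+1, ?_⟩
    have hmem := hΦf2 (qv, r, j) hr0 x hxL
    have hΦn : Φ (n+1) = Φf (qv, r, j) := by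
      show Φf (e n) = Φf (qv, r, j)
      rw [hn]
    rw [hΦn]
    have h1 : dist (Φf (qv, r, j) x) q' ≤ r := Metric.mem_closedBall.1 hmem
    calc dist (Φf (qv, r, j) x) ζ ≤ dist (Φf (qv, r, j) x) q' + dist q' ζ := dist_triangle _ _ _
    _ ≤ r + r := by rw [dist_comm q' ζ]; exact add_le_add h1 hdistq.le
    _ < ε := by linarith
  -- Step 4 : measurable versions of all the integrands
  have hFmx : ∀ n : ℕ, ∃ F, Measurable F ∧ ∀ x ∈ closure S, F x = f x (Φ n x) :=
    fun n => AHMaux.measVersion hf_meas hf_cont (hΦsel n).1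
  choose Fm hFmm hFme using hFmx
  set mstar : (Fin 2 → ℝ) → ℝ≥0∞ := fun x => ⨅ n, Fm n x with hmstar
  have hmeq : ∀ x ∈ S, (⨅ ζ ∈ Γ x, f x ζ) = mstar x := by
    intro x hxS
    have hxK := hSK hxS
    apply le_antisymm
    · refine le_iInf fun n => ?_
      rw [hFme n x hxK]
      exact iInf₂_le (Φ n x) ((hΦsel n).2 x hxK)
    · refine le_iInf₂ fun ζ hζ => ?_
      have hseq : ∀ k : ℕ, ∃ n, dist (Φ n x) ζ < 1/(k+1) :=
        fun k => hdense x hxK ζ hζ _ (by positivity)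
      choose u hu using hseq
      have htend : Tendsto (fun k => Φ (u k) x) atTop (nhds ζ) := by
        rw [Metric.tendsto_atTop]
        intro ε' hε'
        obtain ⟨N, hNlt⟩ := exists_nat_one_div_lt hε'
        refine ⟨N, fun k hk => ?_⟩
        calc dist (Φ (u k) x) ζ < 1/(k+1) := hu k
        _ ≤ 1/(N+1) := by
            apply one_div_le_one_div_of_le
            · positivity
            · exact_mod_cast by omega
        _ < ε' := hNlt
      have hft : Tendsto (fun k => f x (Φ (u k) x)) atTop (nhds (f x ζ)) :=
        ((hf_cont x hxK).tendsto ζ).comp htend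
      refine ge_of_tendsto hft ?_
      filter_upwards with k
      rw [← hFme (u k) x hxK]
      exact iInf_le _ (u k)
  -- Step 5 : the decreasing sequence of partial minima
  set hN : ℕ → (Fin 2 → ℝ) → ℝ≥0∞ := fun N x => ⨅ k ∈ Finset.range (N+1), Fm k x with hhNdef
  have hhNm : ∀ N, Measurable (hN N) :=
    fun N => Measurable.iInf fun k => Measurable.iInf fun _ => hFmm k
  have hhN0 : ∀ x, hN 0 x = Fm 0 x := by
    intro x
    rw [hhNdef]
    simp
  have hhanti : Antitone hN := by
    intro N M hNM x
    exact biInf_mono fun k hk => Finset.mem_range.2 ((Finset.mem_range.1 hk).trans_le (by omega))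
  have hiInfhN : ∀ x, (⨅ N, hN N x) = mstar x := by
    intro x
    apply le_antisymm
    · refine le_iInf fun n => ?_
      exact (iInf_le _ n).trans (iInf₂_le n (Finset.self_mem_range_succ n))
    · exact le_iInf fun N => le_iInf₂ fun k _ => iInf_le _ k
  have hsupconst : ∀ (ψ : (Fin 2 → ℝ) → (Fin 3 → ℝ)) (x : Fin 2 → ℝ),
      (⨆ α ∈ Set.Icc (0:ℝ) 1, f x (α • ψ x + (1 - α) • ψ x)) = f x (ψ x) := by
    intro ψ x
    have h3 : ∀ α : ℝ, α • ψ x + (1-α) • ψ x = ψ x := fun α => by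
      rw [← add_smul, show α + (1-α) = (1:ℝ) by ring, one_smul]
    simp only [h3]
    exact biSup_const (Set.nonempty_Icc.2 zero_le_one)
  have hint0 : ∫⁻ x in S, hN 0 x ≠ ⊤ := by
    have h1 : ∫⁻ x in S, hN 0 x
        = ∫⁻ x in S, ⨆ α ∈ Set.Icc (0:ℝ) 1, f x (α • Φ 0 x + (1 - α) • Φ 0 x) := by
      apply setLIntegral_congr_fun hSm
      intro x hxS
      beta_reduce
      rw [hhN0, hFme 0 x (hSK hxS), hsupconst (Φ 0) x]
    rw [h1]
    exact (hint (Φ 0) (Φ 0) (hΦsel 0) (hΦsel 0)).ne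
  -- Step 6 : measurable dominating function on segments between two selections
  have segInt : ∀ φ' χ : (Fin 2 → ℝ) → (Fin 3 → ℝ),
      (ContinuousOn φ' (closure S) ∧ ∀ x ∈ closure S, φ' x ∈ Γ x) →
      (ContinuousOn χ (closure S) ∧ ∀ x ∈ closure S, χ x ∈ Γ x) →
      ∃ G : (Fin 2 → ℝ) → ℝ≥0∞, Measurable G ∧
        (∀ x ∈ closure S, ∀ α ∈ Set.Icc (0:ℝ) 1, f x (α • φ' x + (1-α) • χ x) ≤ G x) ∧
        ∫⁻ x in S, G x ≠ ⊤ := by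
    intro φ' χ hφ' hχ
    have hψc : ∀ q : ℚ, ContinuousOn (fun x => (q:ℝ) • φ' x + (1-(q:ℝ)) • χ x) (closure S) :=
      fun q => (hφ'.1.const_smul (q:ℝ)).add (hχ.1.const_smul (1-(q:ℝ)))
    have hmv : ∀ q : ℚ, ∃ F, Measurable F ∧
        ∀ x ∈ closure S, F x = f x ((q:ℝ) • φ' x + (1-(q:ℝ)) • χ x) :=
      fun q => AHMaux.measVersion hf_meas hf_cont (hψc q)
    choose Fq hFqm hFqe using hmv
    refine ⟨fun x => ⨆ q ∈ {q : ℚ | 0 ≤ q ∧ q ≤ 1}, Fq q x,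
      Measurable.iSup fun q => Measurable.iSup fun _ => hFqm q, ?_, ?_⟩
    · intro x hxK α hα
      have happ : ∀ k : ℕ, ∃ q : ℚ, (0 ≤ q ∧ q ≤ 1) ∧ |(q:ℝ) - α| < 1/(k+1) := by
        intro k
        have hk1 : (0:ℝ) < 1/(k+1) := by positivity
        obtain ⟨q, hq1, hq2⟩ := exists_rat_btwn (show α - 1/(k+1) < α by linarith)
        refine ⟨max q 0, ⟨le_max_right _ _, ?_⟩, ?_⟩
        · apply max_le _ (by norm_num)
          have : (q:ℝ) ≤ 1 := hq2.le.trans hα.2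
          exact_mod_cast this
        · have hcast : ((max q 0 : ℚ):ℝ) = max (q:ℝ) 0 := by push_cast; rfl
          rw [hcast, abs_lt]
          constructor
          · rcases le_total (0:ℝ) q with h | h
            · rw [max_eq_left h]; linarith
            · rw [max_eq_right h]; linarith [hα.1]
          · rcases le_total (0:ℝ) q with h | h
            · rw [max_eq_left h]; linarith
            · rw [max_eq_right h]; linarith [hα.1]
      choose qs hqs1 hqs2 using happ
      have htq : Tendsto (fun k => ((qs k : ℚ):ℝ)) atTop (nhds α) := by
        rw [Metric.tendsto_atTop]
        intro ε' hε'
        obtain ⟨N, hNlt⟩ := exists_nat_one_div_lt hε'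
        refine ⟨N, fun k hk => ?_⟩
        rw [Real.dist_eq]
        calc |((qs k:ℚ):ℝ) - α| < 1/(k+1) := hqs2 k
        _ ≤ 1/(N+1) := by
            apply one_div_le_one_div_of_le
            · positivity
            · exact_mod_cast by omega
        _ < ε' := hNlt
      have htv : Tendsto (fun k => ((qs k:ℚ):ℝ) • φ' x + (1-((qs k:ℚ):ℝ)) • χ x) atTop
          (nhds (α • φ' x + (1-α) • χ x)) :=
        (htq.smul tendsto_const_nhds).add ((tendsto_const_nhds.sub htq).smul tendsto_const_nhds)
      have hft : Tendsto (fun k => f x (((qs k:ℚ):ℝ) • φ' x + (1-((qs k:ℚ):ℝ)) • χ x)) atTop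
          (nhds (f x (α • φ' x + (1-α) • χ x))) :=
        ((hf_cont x hxK).tendsto _).comp htv
      refine le_of_tendsto hft ?_
      filter_upwards with k
      rw [← hFqe (qs k) x hxK]
      exact le_iSup₂ (f := fun q _ => Fq q x) (qs k) (hqs1 k)
    · have hle : ∀ x ∈ S, (⨆ q ∈ {q : ℚ | 0 ≤ q ∧ q ≤ 1}, Fq q x)
          ≤ ⨆ α ∈ Set.Icc (0:ℝ) 1, f x (α • φ' x + (1-α) • χ x) := by
        intro x hxS
        refine iSup₂_le fun q hq => ?_
        rw [hFqe q x (hSK hxS)]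
        exact le_iSup₂ (f := fun α (_ : α ∈ Set.Icc (0:ℝ) 1) =>
          f x (α • φ' x + (1-α) • χ x)) ((q:ℝ))
          ⟨by exact_mod_cast hq.1, by exact_mod_cast hq.2⟩
      refine ne_of_lt (lt_of_le_of_lt ?_ (hint φ' χ hφ' hχ))
      refine lintegral_mono_ae ?_
      rw [ae_restrict_iff' hSm]
      filter_upwards with x hxS using hle x hxS
  -- Step 7 : the main induction
  have hGmain : ∀ N : ℕ, ∀ ε : ℝ≥0∞, ε ≠ 0 →
      ∃ χ Fχ, (ContinuousOn χ (closure S) ∧ ∀ x ∈ closure S, χ x ∈ Γ x) ∧ Measurable Fχ ∧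
        (∀ x ∈ closure S, Fχ x = f x (χ x)) ∧ (∫⁻ x in S, (Fχ x - hN N x)) ≤ ε := by
    intro N
    induction N with
    | zero =>
      intro ε hε
      refine ⟨Φ 0, Fm 0, hΦsel 0, hFmm 0, hFme 0, ?_⟩
      have h1 : (∫⁻ x in S, (Fm 0 x - hN 0 x)) = ∫⁻ _x in S, (0:ℝ≥0∞) := by
        apply lintegral_congr
        intro x
        rw [hhN0, tsub_self]
      rw [h1, lintegral_const, zero_mul]
      exact zero_le
    | succ N IH =>
      intro ε hε
      have hε2 : ε/2 ≠ 0 := by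
        simp only [ne_eq, ENNReal.div_eq_zero_iff, hε, false_or]
        exact (by norm_num : (2:ℝ≥0∞) ≠ ⊤)
      obtain ⟨χ, Fχ, hχsel, hFχm, hFχe, hIH⟩ := IH (ε/2) hε2
      obtain ⟨G, hGm, hGle, hGfin⟩ := segInt (Φ (N+1)) χ (hΦsel (N+1)) hχsel
      have hε4 : ε/4 ≠ 0 := by
        simp only [ne_eq, ENNReal.div_eq_zero_iff, hε, false_or]
        exact (by norm_num : (4:ℝ≥0∞) ≠ ⊤)
      obtain ⟨δ, hδ0, hδ⟩ := exists_pos_setLIntegral_lt_of_measure_lt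
        (μ := volume.restrict S) (f := G) hGfin hε4
      set A := S ∩ {x | Fm (N+1) x ≤ Fχ x} with hAdef
      have hAm : MeasurableSet A := hSm.inter (measurableSet_le (hFmm (N+1)) hFχm)
      set B := S \ A with hBdef
      have hBm : MeasurableSet B := hSm.diff hAm
      have hδ2 : δ/2 ≠ 0 := by
        simp only [ne_eq, ENNReal.div_eq_zero_iff, hδ0.ne', false_or]
        exact (by norm_num : (2:ℝ≥0∞) ≠ ⊤)
      obtain ⟨T, hTA, hTc, hTA'⟩ := hAm.exists_isCompact_diff_lt
        (ne_top_of_le_ne_top hμS (measure_mono Set.inter_subset_left)) hδ2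
      obtain ⟨T', hT'B, hT'c, hT'B'⟩ := hBm.exists_isCompact_diff_lt
        (ne_top_of_le_ne_top hμS (measure_mono Set.diff_subset)) hδ2
      have hdisj : Disjoint T' T :=
        (Set.disjoint_sdiff_left (s := A) (t := S)).mono hT'B hTA
      obtain ⟨u, hu0, hu1, hu01⟩ := exists_continuous_zero_one_of_isClosed
        hT'c.isClosed hTc.isClosed hdisj
      set χ' : (Fin 2 → ℝ) → (Fin 3 → ℝ) :=
        fun x => u x • Φ (N+1) x + (1 - u x) • χ x with hχ'def
      have hχ'sel : ContinuousOn χ' (closure S) ∧ ∀ x ∈ closure S, χ' x ∈ Γ x := by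
        constructor
        · exact ((u.continuous.continuousOn).smul (hΦsel (N+1)).1).add
            (((continuous_const.sub u.continuous).continuousOn).smul hχsel.1)
        · intro x hx
          exact hconv x hx ((hΦsel (N+1)).2 x hx) (hχsel.2 x hx) (hu01 x).1
            (by linarith [(hu01 x).2]) (by ring)
      obtain ⟨Fχ', hFχ'm, hFχ'e⟩ := AHMaux.measVersion hf_meas hf_cont hχ'sel.1
      set R := S \ (T ∪ T') with hRdef
      have hRm : MeasurableSet R := hSm.diff (hTc.measurableSet.union hT'c.measurableSet)
      have hsplit : ∀ x, hN (N+1) x = Fm (N+1) x ⊓ hN N x := by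
        intro x
        rw [hhNdef]
        simp only
        rw [Finset.range_add_one, Finset.iInf_insert]
      have hpt : ∀ x ∈ S, Fχ' x - hN (N+1) x ≤ (Fχ x - hN N x) + R.indicator G x := by
        intro x hxS
        have hxK := hSK hxS
        by_cases hxT : x ∈ T
        · have hxA : x ∈ A := hTA hxT
          have hu1x : u x = 1 := hu1 hxT
          have hχ'x : χ' x = Φ (N+1) x := by
            rw [hχ'def]
            simp [hu1x]
          have hFeq : Fχ' x = Fm (N+1) x := by
            rw [hFχ'e x hxK, hχ'x, ← hFme (N+1) x hxK]
          rw [hFeq, hsplit x]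
          rcases le_total (hN N x) (Fm (N+1) x) with hc | hc
          · rw [inf_eq_right.2 hc]
            exact le_add_right (tsub_le_tsub_right hxA.2 _)
          · rw [inf_eq_left.2 hc, tsub_self]
            exact zero_le
        · by_cases hxT' : x ∈ T'
          · have hxB : x ∈ B := hT'B hxT'
            have hu0x : u x = 0 := hu0 hxT'
            have hχ'x : χ' x = χ x := by
              rw [hχ'def]
              simp [hu0x]
            have hFeq : Fχ' x = Fχ x := by
              rw [hFχ'e x hxK, hχ'x, ← hFχe x hxK]
            rw [hFeq, hsplit x]
            have hlt : ¬ (Fm (N+1) x ≤ Fχ x) := fun hc => hxB.2 ⟨hxS, hc⟩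
            rcases le_total (hN N x) (Fm (N+1) x) with hc | hc
            · rw [inf_eq_right.2 hc]
              exact le_add_right le_rfl
            · rw [inf_eq_left.2 hc, tsub_eq_zero_of_le (not_le.1 hlt).le]
              exact zero_le
          · have hxR : x ∈ R := ⟨hxS, fun hc => hc.elim hxT hxT'⟩
            have hb : Fχ' x ≤ G x := by
              rw [hFχ'e x hxK]
              exact hGle x hxK (u x) (hu01 x)
            calc Fχ' x - hN (N+1) x ≤ G x := le_trans tsub_le_self hb
            _ = R.indicator G x := (Set.indicator_of_mem hxR G).symm
            _ ≤ _ := le_add_self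
      have hμR : (volume.restrict S) R < δ := by
        have hsub : R ⊆ (A \ T) ∪ (B \ T') := by
          rintro x ⟨hxS, hxTT⟩
          by_cases hxA : x ∈ A
          · exact Or.inl ⟨hxA, fun h => hxTT (Or.inl h)⟩
          · exact Or.inr ⟨⟨hxS, hxA⟩, fun h => hxTT (Or.inr h)⟩
        calc (volume.restrict S) R ≤ volume R := Measure.restrict_le_self _ -- may need fix
        _ ≤ volume ((A \ T) ∪ (B \ T')) := measure_mono hsub
        _ ≤ volume (A \ T) + volume (B \ T') := measure_union_le _ _
        _ < δ/2 + δ/2 := ENNReal.add_lt_add hTA' hT'B'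
        _ = δ := ENNReal.add_halves δ
      have hRint : (∫⁻ x in S, R.indicator G x) < ε/4 := by
        rw [lintegral_indicator hRm]
        exact hδ R hμR
      refine ⟨χ', Fχ', hχ'sel, hFχ'm, hFχ'e, ?_⟩
      calc (∫⁻ x in S, (Fχ' x - hN (N+1) x))
          ≤ ∫⁻ x in S, ((Fχ x - hN N x) + R.indicator G x) := by
            apply lintegral_mono_ae
            rw [ae_restrict_iff' hSm]
            exact Filter.Eventually.of_forall hpt
      _ = (∫⁻ x in S, (Fχ x - hN N x)) + ∫⁻ x in S, R.indicator G x :=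
            lintegral_add_left (hFχm.sub (hhNm N)) _
      _ ≤ ε/2 + ε/4 := add_le_add hIH hRint.le
      _ ≤ ε/2 + ε/2 := by
            exact add_le_add le_rfl (ENNReal.div_le_div_left (by norm_num) ε)
      _ = ε := ENNReal.add_halves ε
  -- Step 8 : conclusion
  apply le_antisymm
  · have hRHS : (∫⁻ x in S, ⨅ ζ ∈ Γ x, f x ζ) = ⨅ N, ∫⁻ x in S, hN N x := by
      rw [setLIntegral_congr_fun hSm hmeq]
      rw [← lintegral_iInf hhNm hhanti hint0]
      apply lintegral_congr
      intro x
      exact (hiInfhN x).symm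
    rw [hRHS]
    apply ENNReal.le_of_forall_pos_le_add
    intro ε' hε' _
    have hstep : ∀ N : ℕ, (⨅ φ : {φ : (Fin 2 → ℝ) → (Fin 3 → ℝ) //
        ContinuousOn φ (closure S) ∧ ∀ x ∈ closure S, φ x ∈ Γ x},
        ∫⁻ x in S, f x (φ.1 x)) ≤ (∫⁻ x in S, hN N x) + ε' := by
      intro N
      have hne' : (ε' : ℝ≥0∞) ≠ 0 := by
        simp only [ne_eq, ENNReal.coe_eq_zero]
        exact hε'.ne'
      obtain ⟨χ, Fχ, hχs, hFχm, hFχe, hmain⟩ := hGmain N ε' hne'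
      calc (⨅ φ : {φ : (Fin 2 → ℝ) → (Fin 3 → ℝ) //
            ContinuousOn φ (closure S) ∧ ∀ x ∈ closure S, φ x ∈ Γ x},
          ∫⁻ x in S, f x (φ.1 x)) ≤ ∫⁻ x in S, f x (χ x) := iInf_le (fun φ : {φ : (Fin 2 → ℝ) → (Fin 3 → ℝ) //
            ContinuousOn φ (closure S) ∧ ∀ x ∈ closure S, φ x ∈ Γ x} => ∫⁻ x in S, f x (φ.1 x)) ⟨χ, hχs⟩
      _ = ∫⁻ x in S, Fχ x := by
          apply setLIntegral_congr_fun hSm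
          intro x hxS
          exact (hFχe x (hSK hxS)).symm
      _ ≤ ∫⁻ x in S, (hN N x + (Fχ x - hN N x)) := lintegral_mono fun x => le_add_tsub
      _ = (∫⁻ x in S, hN N x) + ∫⁻ x in S, (Fχ x - hN N x) := lintegral_add_left (hhNm N) _
      _ ≤ (∫⁻ x in S, hN N x) + ε' := add_le_add le_rfl hmain
    calc (⨅ φ : {φ : (Fin 2 → ℝ) → (Fin 3 → ℝ) //
          ContinuousOn φ (closure S) ∧ ∀ x ∈ closure S, φ x ∈ Γ x},
        ∫⁻ x in S, f x (φ.1 x)) ≤ ⨅ N, ((∫⁻ x in S, hN N x) + ε') := le_iInf hstep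
    _ = (⨅ N, ∫⁻ x in S, hN N x) + ε' := by
        rw [ENNReal.iInf_add]
  · refine le_iInf fun φ => ?_
    apply lintegral_mono_ae
    rw [ae_restrict_iff' hSm]
    filter_upwards with x hxS
    exact iInf₂_le (φ.1 x) (φ.2.2 x (hSK hxS))
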